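/- For every n ≥ 4, the antiprism graph on 2n vertices admits an embedding with scale 2 into ℤ^{n+1} in which every coordinate of the image of every vertex lies in {0,1} (i.e., Antiprism_n embeds with scale 2 into the hypercube H_{n+1}). -/
import Mathlib


/-- The antiprism graph on `Fin 2 × ZMod n`: `(0,i)` is adjacent to `(0, i±1)`,
`(1,i)` is adjacent to `(1, i±1)`, and `(0,i)` is adjacent to `(1,i)` and `(1,i-1)`. -/
def antiprismGraph (n : ℕ) : SimpleGraph (Fin 2 × ZMod n) :=
  SimpleGraph.fromRel (fun p q =>
    (p.1 = q.1 ∧ p.2 = q.2 + 1) ∨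
    (p.1 = 0 ∧ q.1 = 1 ∧ (p.2 = q.2 ∨ p.2 = q.2 + 1)))

namespace APX

/-- arc membership: for `a ∈ [0,2n)`, `j ∈ [0,n)`: `(a - j) mod 2n < n`. -/
def inA (n a j : ℕ) : Prop := (j ≤ a ∧ a < j + n) ∨ a + n < j

instance (n a j : ℕ) : Decidable (inA n a j) := by unfold inA; infer_instance

def F (n : ℕ) (a : ℕ) : Fin (n+1) → ℤ := fun j =>
  if (j : ℕ) < n then (if inA n a (j : ℕ) then 1 else 0) else ((a % 2 : ℕ) : ℤ)

lemma F01 (n a : ℕ) (j : Fin (n+1)) : F n a j = 0 ∨ F n a j = 1 := by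
  unfold F; split_ifs <;> omega

lemma F_abs (n a b : ℕ) (j : Fin (n+1)) :
    |F n a j - F n b j| = if F n a j = F n b j then 0 else 1 := by
  rcases F01 n a j with h1 | h1 <;> rcases F01 n b j with h2 | h2 <;>
    rw [h1, h2] <;> simp

lemma reduce (n x : ℕ) (hn : 0 < n) (hx : x < 4 * n) :
    ∃ c, c < n ∧ (x = c ∨ x = c + n ∨ x = c + 2*n ∨ x = c + 3*n) :=
  ⟨if x < n then x else if x < 2*n then x - n else if x < 3*n then x - 2*n else x - 3*n,
   by split_ifs <;> omega, by split_ifs <;> omega⟩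

/-- master lemma: two flips give ℓ1 = 2 -/
lemma sum_two (m : ℕ) (x y : Fin m → ℤ) (j1 j2 : Fin m) (hne : j1 ≠ j2)
    (h1 : |x j1 - y j1| = 1) (h2 : |x j2 - y j2| = 1)
    (h3 : ∀ j, j ≠ j1 → j ≠ j2 → x j = y j) :
    ∑ j, |x j - y j| = 2 := by
  have key : ∀ j, |x j - y j| =
      (if j = j1 then 1 else 0) + (if j = j2 then 1 else 0) := by
    intro j
    by_cases e1 : j = j1
    · subst e1; rw [if_pos rfl, if_neg hne, h1]; ring
    · by_cases e2 : j = j2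
      · subst e2; rw [if_neg e1, if_pos rfl, h2]; ring
      · rw [if_neg e1, if_neg e2, h3 j e1 e2]; simp
  rw [Finset.sum_congr rfl fun j _ => key j, Finset.sum_add_distrib]
  simp

/-- master lemma: two flips toward z decrease ℓ1 by 2 -/
lemma sum_toward (m : ℕ) (x y z : Fin m → ℤ) (j1 j2 : Fin m) (hne : j1 ≠ j2)
    (h1 : |x j1 - z j1| = 1) (h2 : |x j2 - z j2| = 1)
    (hy1 : y j1 = z j1) (hy2 : y j2 = z j2)
    (h3 : ∀ j, j ≠ j1 → j ≠ j2 → x j = y j) :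
    ∑ j, |x j - z j| = (∑ j, |y j - z j|) + 2 := by
  have key : ∀ j, |x j - z j| =
      |y j - z j| + ((if j = j1 then 1 else 0) + (if j = j2 then 1 else 0)) := by
    intro j
    by_cases e1 : j = j1
    · subst e1; rw [if_pos rfl, if_neg hne, h1, hy1]; simp
    · by_cases e2 : j = j2
      · subst e2; rw [if_neg e1, if_pos rfl, h2, hy2]; simp
      · rw [if_neg e1, if_neg e2, h3 j e1 e2]; simp
  rw [Finset.sum_congr rfl fun j _ => key j, Finset.sum_add_distrib,
    Finset.sum_add_distrib]
  simp

end APX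

namespace APX

lemma F_lt (n a : ℕ) (j : Fin (n+1)) (h : (j:ℕ) < n) :
    F n a j = if inA n a (j:ℕ) then 1 else 0 := if_pos h

lemma F_top (n a : ℕ) (j : Fin (n+1)) (h : ¬ (j:ℕ) < n) :
    F n a j = ((a % 2 : ℕ) : ℤ) := if_neg h

lemma F_eq_of (n a b : ℕ) (j : Fin (n+1)) (h : (j:ℕ) < n)
    (he : inA n a (j:ℕ) ↔ inA n b (j:ℕ)) : F n a j = F n b j := by
  rw [F_lt _ _ _ h, F_lt _ _ _ h]; exact if_congr he rfl rfl

lemma F_ne_of (n a b : ℕ) (j : Fin (n+1)) (h : (j:ℕ) < n)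
    (hne : ¬ (inA n a (j:ℕ) ↔ inA n b (j:ℕ))) : F n a j ≠ F n b j := by
  rw [F_lt _ _ _ h, F_lt _ _ _ h]
  by_cases h1 : inA n a (j:ℕ) <;> by_cases h2 : inA n b (j:ℕ) <;>
      first
        | exact absurd (iff_of_true h1 h2) hne
        | exact absurd (iff_of_false h1 h2) hne
        | simp [h1, h2]

lemma abs_F_eq_one (n a b : ℕ) (j : Fin (n+1)) (h : F n a j ≠ F n b j) :
    |F n a j - F n b j| = 1 := by rw [F_abs, if_neg h]

/-- adjacency step: positions differing by 1 or 2 on the 2n-cycle have ℓ1 distance 2. -/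
lemma S (n a a' : ℕ) (hn : 4 ≤ n) (ha : a < 2*n) (ha' : a' < 2*n)
    (hmov : (a' = a + 1 ∨ a' + 2*n = a + 1) ∨ (a' = a + 2 ∨ a' + 2*n = a + 2)) :
    ∑ j, |F n a' j - F n a j| = 2 := by
  obtain ⟨c1, hc1, hc1'⟩ := reduce n (a+1) (by omega) (by omega)
  rcases hmov with hmov | hmov
  · -- δ = 1 : flips at c1 and parity coordinate n
    refine sum_two _ _ _ ⟨c1, by omega⟩ ⟨n, by omega⟩ (by simp; omega) ?_ ?_ ?_
    · exact abs_F_eq_one n a' a _ (F_ne_of n a' a ⟨c1, by omega⟩ (by simpa using hc1)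
        (by show ¬(inA n a' c1 ↔ inA n a c1); unfold inA; omega))
    · rw [abs_F_eq_one]
      rw [F_top n a' _ (by simp), F_top n a _ (by simp)]
      intro h
      have : a' % 2 = a % 2 := by exact_mod_cast h
      omega
    · intro j hj1 hj2
      rcases Nat.lt_or_ge (j : ℕ) n with h | h
      · refine F_eq_of n a' a j h ?_
        have : (j : ℕ) ≠ c1 := fun he => hj1 (Fin.ext (by simpa using he))
        unfold inA; omega
      · rw [F_top n a' _ (by omega), F_top n a _ (by omega)]
        exact absurd (Fin.ext (by simp; omega)) hj2
  · -- δ = 2 : flips at c1 and c2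
    obtain ⟨c2, hc2, hc2'⟩ := reduce n (a+2) (by omega) (by omega)
    refine sum_two _ _ _ ⟨c1, by omega⟩ ⟨c2, by omega⟩
      (fun he => by simp only [Fin.mk.injEq] at he; omega) ?_ ?_ ?_
    · exact abs_F_eq_one n a' a _ (F_ne_of n a' a ⟨c1, by omega⟩ (by simpa using hc1)
        (by show ¬(inA n a' c1 ↔ inA n a c1); unfold inA; omega))
    · exact abs_F_eq_one n a' a _ (F_ne_of n a' a ⟨c2, by omega⟩ (by simpa using hc2)
        (by show ¬(inA n a' c2 ↔ inA n a c2); unfold inA; omega))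
    · intro j hj1 hj2
      rcases Nat.lt_or_ge (j : ℕ) n with h | h
      · refine F_eq_of n a' a j h ?_
        have e1 : (j : ℕ) ≠ c1 := fun he => hj1 (Fin.ext (by simpa using he))
        have e2 : (j : ℕ) ≠ c2 := fun he => hj2 (Fin.ext (by simpa using he))
        unfold inA; omega
      · rw [F_top n a' _ (by omega), F_top n a _ (by omega)]
        congr 1; omega

end APX

namespace APX

/-- move a → a+2 toward b, when t = (b-a) mod 2n ∈ [2,n] -/
lemma Tp2 (n a a' b : ℕ) (hn : 4 ≤ n) (ha : a < 2*n) (ha' : a' < 2*n) (hb : b < 2*n)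
    (hmov : a' = a + 2 ∨ a' + 2*n = a + 2)
    (ht : (a + 2 ≤ b ∧ b ≤ a + n) ∨ (b < a ∧ b + n ≤ a ∧ a + 2 ≤ b + 2*n)) :
    ∑ j, |F n a j - F n b j| = (∑ j, |F n a' j - F n b j|) + 2 := by
  obtain ⟨c1, hc1, hc1'⟩ := reduce n (a+1) (by omega) (by omega)
  obtain ⟨c2, hc2, hc2'⟩ := reduce n (a+2) (by omega) (by omega)
  refine sum_toward _ (F n a) (F n a') (F n b) ⟨c1, by omega⟩ ⟨c2, by omega⟩
    (fun he => by simp only [Fin.mk.injEq] at he; omega) ?_ ?_ ?_ ?_ ?_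
  · exact abs_F_eq_one n a b _ (F_ne_of n a b ⟨c1, by omega⟩ (by simpa using hc1)
      (by show ¬(inA n a c1 ↔ inA n b c1); unfold inA; omega))
  · exact abs_F_eq_one n a b _ (F_ne_of n a b ⟨c2, by omega⟩ (by simpa using hc2)
      (by show ¬(inA n a c2 ↔ inA n b c2); unfold inA; omega))
  · exact F_eq_of n a' b ⟨c1, by omega⟩ (by simpa using hc1)
      (by show inA n a' c1 ↔ inA n b c1; unfold inA; omega)
  · exact F_eq_of n a' b ⟨c2, by omega⟩ (by simpa using hc2)
      (by show inA n a' c2 ↔ inA n b c2; unfold inA; omega)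
  · intro j hj1 hj2
    rcases Nat.lt_or_ge (j : ℕ) n with h | h
    · refine F_eq_of n a a' j h ?_
      have e1 : (j : ℕ) ≠ c1 := fun he => hj1 (Fin.ext (by simpa using he))
      have e2 : (j : ℕ) ≠ c2 := fun he => hj2 (Fin.ext (by simpa using he))
      unfold inA; omega
    · rw [F_top n a _ (by omega), F_top n a' _ (by omega)]; congr 1; omega

/-- move a → a+1 toward b, when t ∈ [1,n] and t odd -/
lemma Tp1 (n a a' b : ℕ) (hn : 4 ≤ n) (ha : a < 2*n) (ha' : a' < 2*n) (hb : b < 2*n)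
    (hmov : a' = a + 1 ∨ a' + 2*n = a + 1)
    (ht : (a + 1 ≤ b ∧ b ≤ a + n) ∨ (b < a ∧ b + n ≤ a))
    (hpar : a % 2 ≠ b % 2) :
    ∑ j, |F n a j - F n b j| = (∑ j, |F n a' j - F n b j|) + 2 := by
  obtain ⟨c1, hc1, hc1'⟩ := reduce n (a+1) (by omega) (by omega)
  refine sum_toward _ (F n a) (F n a') (F n b) ⟨c1, by omega⟩ ⟨n, by omega⟩
    (fun he => by simp only [Fin.mk.injEq] at he; omega) ?_ ?_ ?_ ?_ ?_
  · exact abs_F_eq_one n a b _ (F_ne_of n a b ⟨c1, by omega⟩ (by simpa using hc1)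
      (by show ¬(inA n a c1 ↔ inA n b c1); unfold inA; omega))
  · refine abs_F_eq_one n a b _ ?_
    rw [F_top n a _ (by simp), F_top n b _ (by simp)]
    intro h; exact hpar (Nat.cast_injective h)
  · exact F_eq_of n a' b ⟨c1, by omega⟩ (by simpa using hc1)
      (by show inA n a' c1 ↔ inA n b c1; unfold inA; omega)
  · rw [F_top n a' _ (by simp), F_top n b _ (by simp)]; congr 1; omega
  · intro j hj1 hj2
    rcases Nat.lt_or_ge (j : ℕ) n with h | h
    · refine F_eq_of n a a' j h ?_
      have e1 : (j : ℕ) ≠ c1 := fun he => hj1 (Fin.ext (by simpa using he))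
      unfold inA; omega
    · exact absurd (Fin.ext (by simp; omega)) hj2

/-- move a → a-2 toward b, when t ∈ [n+1, 2n-2] -/
lemma Tm2 (n a a' b : ℕ) (hn : 4 ≤ n) (ha : a < 2*n) (ha' : a' < 2*n) (hb : b < 2*n)
    (hmov : a = a' + 2 ∨ a + 2*n = a' + 2)
    (ht : (a + n + 1 ≤ b ∧ b + 2 ≤ a + 2*n) ∨ (b + 2 ≤ a ∧ a + 1 ≤ b + n)) :
    ∑ j, |F n a j - F n b j| = (∑ j, |F n a' j - F n b j|) + 2 := by
  obtain ⟨c1, hc1, hc1'⟩ := reduce n a (by omega) (by omega)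
  obtain ⟨c2, hc2, hc2'⟩ := reduce n (a+2*n-1) (by omega) (by omega)
  refine sum_toward _ (F n a) (F n a') (F n b) ⟨c1, by omega⟩ ⟨c2, by omega⟩
    (fun he => by simp only [Fin.mk.injEq] at he; omega) ?_ ?_ ?_ ?_ ?_
  · exact abs_F_eq_one n a b _ (F_ne_of n a b ⟨c1, by omega⟩ (by simpa using hc1)
      (by show ¬(inA n a c1 ↔ inA n b c1); unfold inA; omega))
  · exact abs_F_eq_one n a b _ (F_ne_of n a b ⟨c2, by omega⟩ (by simpa using hc2)
      (by show ¬(inA n a c2 ↔ inA n b c2); unfold inA; omega))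
  · exact F_eq_of n a' b ⟨c1, by omega⟩ (by simpa using hc1)
      (by show inA n a' c1 ↔ inA n b c1; unfold inA; omega)
  · exact F_eq_of n a' b ⟨c2, by omega⟩ (by simpa using hc2)
      (by show inA n a' c2 ↔ inA n b c2; unfold inA; omega)
  · intro j hj1 hj2
    rcases Nat.lt_or_ge (j : ℕ) n with h | h
    · refine F_eq_of n a a' j h ?_
      have e1 : (j : ℕ) ≠ c1 := fun he => hj1 (Fin.ext (by simpa using he))
      have e2 : (j : ℕ) ≠ c2 := fun he => hj2 (Fin.ext (by simpa using he))
      unfold inA; omega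
    · rw [F_top n a _ (by omega), F_top n a' _ (by omega)]; congr 1; omega

/-- move a → a-1 toward b, when t ∈ [n+1, 2n-1] and t odd -/
lemma Tm1 (n a a' b : ℕ) (hn : 4 ≤ n) (ha : a < 2*n) (ha' : a' < 2*n) (hb : b < 2*n)
    (hmov : a = a' + 1 ∨ a + 2*n = a' + 1)
    (ht : (a + n + 1 ≤ b) ∨ (b + 1 ≤ a ∧ a + 1 ≤ b + n))
    (hpar : a % 2 ≠ b % 2) :
    ∑ j, |F n a j - F n b j| = (∑ j, |F n a' j - F n b j|) + 2 := by
  obtain ⟨c1, hc1, hc1'⟩ := reduce n a (by omega) (by omega)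
  refine sum_toward _ (F n a) (F n a') (F n b) ⟨c1, by omega⟩ ⟨n, by omega⟩
    (fun he => by simp only [Fin.mk.injEq] at he; omega) ?_ ?_ ?_ ?_ ?_
  · exact abs_F_eq_one n a b _ (F_ne_of n a b ⟨c1, by omega⟩ (by simpa using hc1)
      (by show ¬(inA n a c1 ↔ inA n b c1); unfold inA; omega))
  · refine abs_F_eq_one n a b _ ?_
    rw [F_top n a _ (by simp), F_top n b _ (by simp)]
    intro h; exact hpar (Nat.cast_injective h)
  · exact F_eq_of n a' b ⟨c1, by omega⟩ (by simpa using hc1)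
      (by show inA n a' c1 ↔ inA n b c1; unfold inA; omega)
  · rw [F_top n a' _ (by simp), F_top n b _ (by simp)]; congr 1; omega
  · intro j hj1 hj2
    rcases Nat.lt_or_ge (j : ℕ) n with h | h
    · refine F_eq_of n a a' j h ?_
      have e1 : (j : ℕ) ≠ c1 := fun he => hj1 (Fin.ext (by simpa using he))
      unfold inA; omega
    · exact absurd (Fin.ext (by simp; omega)) hj2

end APX

namespace APX

def W (n : ℕ) (u : Fin 2 × ZMod n) : ℕ := 2 * u.2.val + u.1.val

lemma W_lt (n : ℕ) [NeZero n] (u : Fin 2 × ZMod n) : W n u < 2 * n := by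
  have h1 := ZMod.val_lt u.2
  have h2 := u.1.isLt
  unfold W; omega

lemma W_inj (n : ℕ) [NeZero n] {u v : Fin 2 × ZMod n} (h : W n u = W n v) : u = v := by
  have h1 := u.1.isLt; have h2 := v.1.isLt
  unfold W at h
  have e1 : u.1 = v.1 := Fin.ext (by omega)
  have e2 : u.2 = v.2 := ZMod.val_injective n (by omega)
  exact Prod.ext e1 e2

lemma valAdd1 (n : ℕ) (hn : 4 ≤ n) (i : ZMod n) :
    (i + 1).val = i.val + 1 ∨ (i.val + 1 = n ∧ (i + 1).val = 0) := by
  haveI : NeZero n := ⟨by omega⟩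
  haveI : Fact (1 < n) := ⟨by omega⟩
  have hv := ZMod.val_lt i
  have h : (i + 1).val = (i.val + 1) % n := by
    rw [ZMod.val_add, ZMod.val_one]
  rcases Nat.lt_or_ge (i.val + 1) n with hlt | hge
  · left; rw [h, Nat.mod_eq_of_lt hlt]
  · right
    have : i.val + 1 = n := by omega
    exact ⟨this, by rw [h, this, Nat.mod_self]⟩

lemma sub_add_one (n : ℕ) (i : ZMod n) : (i - 1) + 1 = i := by ring

lemma valSub1 (n : ℕ) (hn : 4 ≤ n) (i : ZMod n) :
    i.val = (i - 1).val + 1 ∨ ((i - 1).val + 1 = n ∧ i.val = 0) := by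
  have := valAdd1 n hn (i - 1)
  rw [sub_add_one] at this
  tauto

lemma sum_comm_abs (n a b : ℕ) :
    ∑ j, |F n a j - F n b j| = ∑ j, |F n b j - F n a j| :=
  Finset.sum_congr rfl fun j _ => abs_sub_comm _ _

end APX

namespace APX

lemma adj_iff (n : ℕ) (u v : Fin 2 × ZMod n) :
    (antiprismGraph n).Adj u v ↔ u ≠ v ∧
      (((u.1 = v.1 ∧ u.2 = v.2 + 1) ∨ (u.1 = 0 ∧ v.1 = 1 ∧ (u.2 = v.2 ∨ u.2 = v.2 + 1))) ∨
       ((v.1 = u.1 ∧ v.2 = u.2 + 1) ∨ (v.1 = 0 ∧ u.1 = 1 ∧ (v.2 = u.2 ∨ v.2 = u.2 + 1)))) :=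
  SimpleGraph.fromRel_adj _ u v

lemma adjSum_half (n : ℕ) (hn : 4 ≤ n) (u v : Fin 2 × ZMod n)
    (h : (u.1 = v.1 ∧ u.2 = v.2 + 1) ∨ (u.1 = 0 ∧ v.1 = 1 ∧ (u.2 = v.2 ∨ u.2 = v.2 + 1))) :
    ∑ j, |F n (W n u) j - F n (W n v) j| = 2 := by
  haveI : NeZero n := ⟨by omega⟩
  have h2v := v.1.isLt
  rcases h with ⟨h1, h2⟩ | ⟨h1, h2, h3 | h3⟩
  · -- same ring, u.2 = v.2 + 1 : W u ≡ W v + 2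
    have hu : W n u = 2 * (v.2 + 1).val + v.1.val := by rw [W, h2, h1]
    have hv : W n v = 2 * v.2.val + v.1.val := rfl
    rcases valAdd1 n hn v.2 with hval | ⟨hval1, hval2⟩
    · exact S n (W n v) (W n u) hn (W_lt n v) (W_lt n u) (Or.inr (Or.inl (by omega)))
    · exact S n (W n v) (W n u) hn (W_lt n v) (W_lt n u) (Or.inr (Or.inr (by omega)))
  · -- u = (0,i), v = (1,i) : W v = W u + 1
    have hu : W n u = 2 * v.2.val := by rw [W, h3, h1]; rfl
    have hv : W n v = 2 * v.2.val + 1 := by rw [W, h2]; rfl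
    rw [sum_comm_abs]
    exact S n (W n u) (W n v) hn (W_lt n u) (W_lt n v) (Or.inl (Or.inl (by omega)))
  · -- u = (0, k+1), v = (1, k) : W u ≡ W v + 1
    have hu : W n u = 2 * (v.2 + 1).val := by rw [W, h3, h1]; rfl
    have hv : W n v = 2 * v.2.val + 1 := by rw [W, h2]; rfl
    rcases valAdd1 n hn v.2 with hval | ⟨hval1, hval2⟩
    · exact S n (W n v) (W n u) hn (W_lt n v) (W_lt n u) (Or.inl (Or.inl (by omega)))
    · exact S n (W n v) (W n u) hn (W_lt n v) (W_lt n u) (Or.inl (Or.inr (by omega)))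

lemma adjSum (n : ℕ) (hn : 4 ≤ n) (u v : Fin 2 × ZMod n)
    (h : (antiprismGraph n).Adj u v) :
    ∑ j, |F n (W n u) j - F n (W n v) j| = 2 := by
  rcases (adj_iff n u v).mp h with ⟨-, hr | hr⟩
  · exact adjSum_half n hn u v hr
  · rw [sum_comm_abs]; exact adjSum_half n hn v u hr

end APX

namespace APX

lemma fin_two_cases (r : Fin 2) : r = 0 ∨ r = 1 := by
  rcases r with ⟨rv, hrv⟩
  interval_cases rv
  · exact Or.inl rfl
  · exact Or.inr rfl

lemma descend (n : ℕ) (hn : 4 ≤ n) (u v : Fin 2 × ZMod n) (huv : u ≠ v) :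
    ∃ w, (antiprismGraph n).Adj u w ∧
      ∑ j, |F n (W n u) j - F n (W n v) j|
        = (∑ j, |F n (W n w) j - F n (W n v) j|) + 2 := by
  haveI : NeZero n := ⟨by omega⟩
  obtain ⟨r, i⟩ := u
  have hab : W n (r, i) ≠ W n v := fun h => huv (W_inj n h)
  have haw := W_lt n (r, i)
  have hbw := W_lt n v
  have hrl := r.isLt
  have hvl := v.1.isLt
  have hu : W n (r, i) = 2 * i.val + r.val := rfl
  have hv : W n v = 2 * v.2.val + v.1.val := rfl
  by_cases hpar : W n (r, i) % 2 = W n v % 2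
  · -- even offset: same-ring moves ±2
    by_cases hdir : (W n (r, i) + 2 ≤ W n v ∧ W n v ≤ W n (r, i) + n) ∨
        (W n v < W n (r, i) ∧ W n v + n ≤ W n (r, i) ∧ W n (r, i) + 2 ≤ W n v + 2*n)
    · refine ⟨(r, i + 1), ?_, ?_⟩
      · rw [adj_iff]
        refine ⟨?_, Or.inr (Or.inl ⟨rfl, rfl⟩)⟩
        intro h
        have h2 := congrArg ZMod.val (congrArg Prod.snd h)
        simp only at h2
        rcases valAdd1 n hn i with hval | ⟨hval1, hval2⟩ <;>
          · have := ZMod.val_lt i; omega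
      · have hw : W n (r, i + 1) = 2 * (i + 1).val + r.val := rfl
        rcases valAdd1 n hn i with hval | ⟨hval1, hval2⟩
        · exact Tp2 n _ _ _ hn haw (W_lt n _) hbw (Or.inl (by omega)) hdir
        · exact Tp2 n _ _ _ hn haw (W_lt n _) hbw (Or.inr (by omega)) hdir
    · refine ⟨(r, i - 1), ?_, ?_⟩
      · rw [adj_iff]
        refine ⟨?_, Or.inl (Or.inl ⟨rfl, (sub_add_one n i).symm⟩)⟩
        intro h
        have h2 := congrArg ZMod.val (congrArg Prod.snd h)
        simp only at h2
        rcases valSub1 n hn i with hval | ⟨hval1, hval2⟩ <;>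
          · have := ZMod.val_lt i; omega
      · have hw : W n (r, i - 1) = 2 * (i - 1).val + r.val := rfl
        have hwlt := W_lt n (r, i - 1)
        rcases valSub1 n hn i with hval | ⟨hval1, hval2⟩
        · exact Tm2 n _ _ _ hn haw hwlt hbw (Or.inl (by omega)) (by omega)
        · exact Tm2 n _ _ _ hn haw hwlt hbw (Or.inr (by omega)) (by omega)
  · -- odd offset: cross-ring moves ±1
    by_cases hdir : (W n (r, i) + 1 ≤ W n v ∧ W n v ≤ W n (r, i) + n) ∨
        (W n v < W n (r, i) ∧ W n v + n ≤ W n (r, i))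
    · -- move +1
      rcases fin_two_cases r with hr | hr <;> subst hr
      · refine ⟨(1, i), ?_, ?_⟩
        · rw [adj_iff]
          refine ⟨?_, Or.inl (Or.inr ⟨rfl, rfl, Or.inl rfl⟩)⟩
          intro h
          exact absurd (congrArg Prod.fst h) (show ¬(0:Fin 2) = 1 by decide)
        · have hw : W n (1, i) = 2 * i.val + 1 := rfl
          exact Tp1 n _ _ _ hn haw (W_lt n _) hbw (Or.inl (by omega)) hdir hpar
      · refine ⟨(0, i + 1), ?_, ?_⟩
        · rw [adj_iff]
          refine ⟨?_, Or.inr (Or.inr ⟨rfl, rfl, Or.inr rfl⟩)⟩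
          intro h
          exact absurd (congrArg Prod.fst h) (show ¬(1:Fin 2) = 0 by decide)
        · have hw : W n (0, i + 1) = 2 * (i + 1).val := rfl
          rcases valAdd1 n hn i with hval | ⟨hval1, hval2⟩
          · exact Tp1 n _ _ _ hn haw (W_lt n _) hbw (Or.inl (by omega)) hdir hpar
          · exact Tp1 n _ _ _ hn haw (W_lt n _) hbw (Or.inr (by omega)) hdir hpar
    · -- move -1
      rcases fin_two_cases r with hr | hr <;> subst hr
      · refine ⟨(1, i - 1), ?_, ?_⟩
        · rw [adj_iff]
          refine ⟨?_, Or.inl (Or.inr ⟨rfl, rfl, Or.inr (sub_add_one n i).symm⟩)⟩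
          intro h
          exact absurd (congrArg Prod.fst h) (show ¬(0:Fin 2) = 1 by decide)
        · have hw : W n (1, i - 1) = 2 * (i - 1).val + 1 := rfl
          have hwlt := W_lt n ((1 : Fin 2), i - 1)
          rcases valSub1 n hn i with hval | ⟨hval1, hval2⟩
          · exact Tm1 n _ _ _ hn haw hwlt hbw (Or.inl (by omega)) (by omega) hpar
          · exact Tm1 n _ _ _ hn haw hwlt hbw (Or.inr (by omega)) (by omega) hpar
      · refine ⟨(0, i), ?_, ?_⟩
        · rw [adj_iff]
          refine ⟨?_, Or.inr (Or.inr ⟨rfl, rfl, Or.inl rfl⟩)⟩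
          intro h
          exact absurd (congrArg Prod.fst h) (show ¬(1:Fin 2) = 0 by decide)
        · have hw : W n (0, i) = 2 * i.val := rfl
          exact Tm1 n _ _ _ hn haw (W_lt n _) hbw (Or.inl (by omega)) (by omega) hpar

end APX

/-- For `n ≥ 4`, the antiprism `Antiprism_n` embeds with scale 2
into the hypercube `H_{n+1} ⊆ ℤ^{n+1}` (all coordinates in `{0,1}`). -/
theorem antiprism_embeds_hypercube (n : ℕ) (hn : 4 ≤ n) :
    ∃ f : Fin 2 × ZMod n → Fin (n + 1) → ℤ,
      (∀ v i, f v i = 0 ∨ f v i = 1) ∧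
      ∀ u v : Fin 2 × ZMod n,
        2 * ((antiprismGraph n).dist u v : ℤ) = ∑ i, |f u i - f v i| := by
  haveI : NeZero n := ⟨by omega⟩
  refine ⟨fun u => APX.F n (APX.W n u), fun v i => APX.F01 n _ i, fun u v => ?_⟩
  show 2 * ((antiprismGraph n).dist u v : ℤ)
      = ∑ j, |APX.F n (APX.W n u) j - APX.F n (APX.W n v) j|
  have tri : ∀ (x y z : Fin 2 × ZMod n),
      (∑ j, |APX.F n (APX.W n x) j - APX.F n (APX.W n z) j|)
        ≤ (∑ j, |APX.F n (APX.W n x) j - APX.F n (APX.W n y) j|)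
          + ∑ j, |APX.F n (APX.W n y) j - APX.F n (APX.W n z) j| := by
    intro x y z
    rw [← Finset.sum_add_distrib]
    exact Finset.sum_le_sum fun j _ => abs_sub_le _ _ _
  have upper : ∀ (x y : Fin 2 × ZMod n) (p : (antiprismGraph n).Walk x y),
      (∑ j, |APX.F n (APX.W n x) j - APX.F n (APX.W n y) j|)
        ≤ 2 * (p.length : ℤ) := by
    intro x y p
    induction p with
    | nil => simp
    | @cons x' y' z' h p ih =>
      have e1 := APX.adjSum n hn _ _ h
      have := tri x' y' z'
      rw [e1] at this
      refine le_trans this ?_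
      rw [SimpleGraph.Walk.length_cons]
      push_cast
      linarith
  have exwalk : ∀ (k : ℕ) (x y : Fin 2 × ZMod n),
      (∑ j, |APX.F n (APX.W n x) j - APX.F n (APX.W n y) j|) ≤ (k : ℤ) →
      ∃ p : (antiprismGraph n).Walk x y,
        2 * (p.length : ℤ) ≤ ∑ j, |APX.F n (APX.W n x) j - APX.F n (APX.W n y) j| := by
    intro k
    induction k using Nat.strong_induction_on with
    | _ k ih =>
      intro x y hk
      by_cases he : x = y
      · subst he; exact ⟨SimpleGraph.Walk.nil, by simp⟩
      · obtain ⟨w, hadj, hsum⟩ := APX.descend n hn x y he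
        have h0 : (0:ℤ) ≤ ∑ j, |APX.F n (APX.W n w) j - APX.F n (APX.W n y) j| :=
          Finset.sum_nonneg fun j _ => abs_nonneg _
        have hk2 : 2 ≤ k := by
          have h2 : (2:ℤ) ≤ (k:ℤ) := by rw [hsum] at hk; linarith
          exact_mod_cast h2
        obtain ⟨p, hp⟩ := ih (k-2) (by omega) w y
          (by
            have hc : ((k-2:ℕ):ℤ) = (k:ℤ) - 2 := by
              push_cast [hk2]; ring
            rw [hc]; rw [hsum] at hk; linarith)
        refine ⟨SimpleGraph.Walk.cons hadj p, ?_⟩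
        rw [hsum, SimpleGraph.Walk.length_cons]
        push_cast
        linarith
  obtain ⟨p, hp⟩ := exwalk (∑ j, |APX.F n (APX.W n u) j - APX.F n (APX.W n v) j|).toNat
    u v (Int.self_le_toNat _)
  have hreach : (antiprismGraph n).Reachable u v := ⟨p⟩
  obtain ⟨q, hq⟩ := hreach.exists_walk_length_eq_dist
  have h1 : (antiprismGraph n).dist u v ≤ p.length := SimpleGraph.dist_le p
  have h2 := upper u v q
  rw [hq] at h2
  have h1' : ((antiprismGraph n).dist u v : ℤ) ≤ (p.length : ℤ) := by exact_mod_cast h1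
  linarith
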